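/- If a spiky function λ on E_n is the connectivity function of a matroid M, then M is a rank-n spike with legs L_1,…,L_n; i.e., for all k ∈ {1,…,n−1} the union of any k legs has rank k+1 in M, and E_n has rank n. -/

import Mathlib

/-- The ground set of a rank-`n` spike: `n` disjoint legs, where the leg `i` consists of
`x_i = (i, true)` and `y_i = (i, false)`. -/
abbrev En (n : ℕ) := Fin n × Bool

/-- The `i`-th leg `L_i = {x_i, y_i}`. -/
def leg (n : ℕ) (i : Fin n) : Set (En n) := {(i, true), (i, false)}

/-- A transversal: a set containing exactly one element of each leg. -/
def IsTransversal {n : ℕ} (X : Set (En n)) : Prop :=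
  ∀ i : Fin n, ((i, true) ∈ X ∧ (i, false) ∉ X) ∨ ((i, true) ∉ X ∧ (i, false) ∈ X)

/-- The hypercube graph `H_n` on transversals: two transversals are adjacent iff they
differ in exactly one element (i.e. their symmetric difference has two elements). -/
def Hn (n : ℕ) : SimpleGraph (Set (En n)) where
  Adj X Y := IsTransversal X ∧ IsTransversal Y ∧ (symmDiff X Y).ncard = 2
  symm := ⟨fun X Y ⟨h1, h2, h3⟩ => ⟨h2, h1, by rwa [symmDiff_comm]⟩⟩
  loopless := ⟨fun X ⟨_, _, h3⟩ => by
    simp [symmDiff_self, Set.bot_eq_empty] at h3⟩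

/-- `I` is an independent set of the hypercube graph `H_n`. -/
def IndepInHn (n : ℕ) (I : Set (Set (En n))) : Prop :=
  (∀ X ∈ I, IsTransversal X) ∧ ∀ X ∈ I, ∀ Y ∈ I, ¬ (Hn n).Adj X Y

/-- `l(X)`: the number of legs which `X` meets. -/
noncomputable def legCount {n : ℕ} (X : Set (En n)) : ℕ :=
  Set.ncard {i : Fin n | (i, true) ∈ X ∨ (i, false) ∈ X}

/-- The rank of a set `X` in a matroid `M`: the largest cardinality of an independent
subset of `X`. -/
noncomputable def mrank {α : Type*} (M : Matroid α) (X : Set α) : ℕ :=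
  sSup {k | ∃ I, M.Indep I ∧ I ⊆ X ∧ I.ncard = k}

/-- The connectivity function of a matroid: μ_M(X) = r(X) + r(E−X) − r(E). -/
noncomputable def mconn {α : Type*} (M : Matroid α) (X : Set α) : ℤ :=
  (mrank M X : ℤ) + (mrank M (M.E \ X) : ℤ) - (mrank M M.E : ℤ)

/-- A circuit of a matroid: a minimal dependent subset of the ground set. -/
def IsCircuit {α : Type*} (M : Matroid α) (C : Set α) : Prop :=
  C ⊆ M.E ∧ ¬ M.Indep C ∧ ∀ D ⊂ C, M.Indep D

/-- The circuits `{x_i, y_i, x_j, y_j}` for `i < j` (i.e. unions of two distinct legs). -/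
def LegPairs (n : ℕ) : Set (Set (En n)) :=
  {C | ∃ i j : Fin n, i ≠ j ∧ C = leg n i ∪ leg n j}

/-- The circuit collection of the spike `S(I)`: unions of two legs, the transversals
in `I`, and all `(n+1)`-element sets containing none of the preceding circuits. -/
def SpikeCircuits (n : ℕ) (I : Set (Set (En n))) : Set (Set (En n)) :=
  (LegPairs n ∪ I) ∪ {C | C.ncard = n + 1 ∧ ∀ D ∈ LegPairs n ∪ I, ¬ D ⊆ C}

open Classical in
/-- The rank function of the free spike `S(∅)` (every rank-`n` spike has this rank
function away from the transversals). -/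
noncomputable def freeSpikeRank (n : ℕ) (X : Set (En n)) : ℕ :=
  if ∀ i : Fin n, ¬ Disjoint (leg n i) X then n
  else if ∃ i, leg n i ⊆ X then legCount X + 1
  else X.ncard

/-- `λ_n(X) = r_n(X) + r_n(E_n − X) − n`: the common value of the connectivity function
of any rank-`n` spike on a non-transversal set `X`. -/
noncomputable def lamN (n : ℕ) (X : Set (En n)) : ℤ :=
  (freeSpikeRank n X : ℤ) + (freeSpikeRank n Xᶜ : ℤ) - (n : ℤ)

/-- A spiky function: symmetric, extends `λ_n` on non-transversals, takes values in
`{n−2, n−1, n}` on transversals, and satisfies `λ(X) + λ(Y) ≥ 2n−2` for transversals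
`X`, `Y` differing in exactly one element. -/
noncomputable def IsSpiky (n : ℕ) (lam : Set (En n) → ℕ) : Prop :=
  (∀ X, lam X = lam Xᶜ) ∧
  (∀ X, ¬ IsTransversal X → (lam X : ℤ) = lamN n X) ∧
  (∀ X, IsTransversal X → lam X = n - 2 ∨ lam X = n - 1 ∨ lam X = n) ∧
  (∀ X Y, IsTransversal X → IsTransversal Y → (symmDiff X Y).ncard = 2 →
    2 * n - 2 ≤ lam X + lam Y)

namespace Stmt11Aux


variable {α : Type*} [Fintype α] {M : Matroid α} {X Y I : Set α}

lemma mrank_bdd (M : Matroid α) (X : Set α) :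
    BddAbove {k | ∃ I, M.Indep I ∧ I ⊆ X ∧ I.ncard = k} := by
  refine ⟨Fintype.card α, fun k ⟨I, _, _, hk⟩ => ?_⟩
  subst hk
  simpa [Set.ncard_univ] using Set.ncard_le_ncard (Set.subset_univ I) Set.finite_univ

lemma exists_mrank (M : Matroid α) (X : Set α) :
    ∃ I, M.Indep I ∧ I ⊆ X ∧ I.ncard = mrank M X := by
  have h : mrank M X ∈ {k | ∃ I, M.Indep I ∧ I ⊆ X ∧ I.ncard = k} :=
    Nat.sSup_mem ⟨0, ⟨∅, M.empty_indep, Set.empty_subset X, by simp⟩⟩ (mrank_bdd M X)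
  exact h

lemma ncard_le_mrank (hI : M.Indep I) (hIX : I ⊆ X) : I.ncard ≤ mrank M X :=
  le_csSup (mrank_bdd M X) ⟨I, hI, hIX, rfl⟩

lemma mrank_le_ncard (M : Matroid α) (X : Set α) : mrank M X ≤ X.ncard := by
  obtain ⟨I, _, hIX, hk⟩ := exists_mrank M X
  exact hk ▸ Set.ncard_le_ncard hIX (Set.toFinite X)

lemma mrank_mono (M : Matroid α) (h : X ⊆ Y) : mrank M X ≤ mrank M Y := by
  obtain ⟨I, hI, hIX, hk⟩ := exists_mrank M X
  exact hk ▸ ncard_le_mrank hI (hIX.trans h)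

lemma indep_of_ncard_le_mrank (h : X.ncard ≤ mrank M X) : M.Indep X := by
  obtain ⟨I, hI, hIX, hk⟩ := exists_mrank M X
  rwa [Set.eq_of_subset_of_ncard_le hIX (hk ▸ h) (Set.toFinite X)] at hI



variable {n : ℕ}

lemma mem_leg {i : Fin n} {p : En n} : p ∈ leg n i ↔ p.1 = i := by
  obtain ⟨j, b⟩ := p
  cases b <;> simp [leg, Prod.ext_iff]

/-- union of the legs indexed by `S` -/
def US (S : Finset (Fin n)) : Set (En n) := {p | p.1 ∈ S}

/-- legs of `S` together with the `true` points outside leg `t` -/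
def XS (S : Finset (Fin n)) (t : Fin n) : Set (En n) :=
  {p | p.1 ∈ S ∨ (p.1 ≠ t ∧ p.2 = true)}

lemma US_eq (S : Finset (Fin n)) : (⋃ i ∈ S, leg n i) = US S := by
  ext p
  simp only [Set.mem_iUnion, mem_leg, US, Set.mem_setOf_eq, exists_prop]
  constructor
  · rintro ⟨i, hi, rfl⟩; exact hi
  · exact fun h => ⟨p.1, h, rfl⟩

lemma compl_US (S : Finset (Fin n)) : (US S)ᶜ = US Sᶜ := by
  ext p; simp [US]

lemma card_En : Nat.card (En n) = 2 * n := by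
  simp [Nat.card_eq_fintype_card, Fintype.card_prod]; ring

lemma not_transversal_US {S : Finset (Fin n)} (hS : S.Nonempty) :
    ¬ IsTransversal (US S) := by
  obtain ⟨s, hs⟩ := hS
  intro h
  rcases h s with ⟨_, h2⟩ | ⟨h1, _⟩
  · exact h2 hs
  · exact h1 hs

lemma not_transversal_XS {S : Finset (Fin n)} (hS : S.Nonempty) (t : Fin n) :
    ¬ IsTransversal (XS S t) := by
  obtain ⟨s, hs⟩ := hS
  intro h
  rcases h s with ⟨_, h2⟩ | ⟨h1, _⟩
  · exact h2 (Or.inl hs)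
  · exact h1 (Or.inl hs)

lemma legCount_US (S : Finset (Fin n)) : legCount (US S) = S.card := by
  have : {i : Fin n | (i, true) ∈ US S ∨ (i, false) ∈ US S} = ↑S := by
    ext i; simp [US]
  rw [legCount, this, Set.ncard_coe_finset]

lemma freeSpikeRank_US {S : Finset (Fin n)} (hS : S.Nonempty) {t : Fin n} (ht : t ∉ S) :
    freeSpikeRank n (US S) = S.card + 1 := by
  rw [freeSpikeRank, if_neg, if_pos, legCount_US]
  · obtain ⟨s, hs⟩ := hS
    exact ⟨s, fun p hp => by rw [US, Set.mem_setOf_eq, mem_leg.mp hp]; exact hs⟩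
  · intro h
    refine h t (Set.disjoint_left.mpr fun p hp hp' => ht ?_)
    rw [← mem_leg.mp hp]; exact hp'

lemma legCount_XS {S : Finset (Fin n)} {t : Fin n} (ht : t ∉ S) :
    legCount (XS S t) = n - 1 := by
  have h1 : {i : Fin n | (i, true) ∈ XS S t ∨ (i, false) ∈ XS S t} = ({t} : Set (Fin n))ᶜ := by
    ext i
    simp only [XS, Set.mem_setOf_eq, Set.mem_compl_iff, Set.mem_singleton_iff]
    constructor
    · rintro (h | h) hit
      · rcases h with h | ⟨h, _⟩
        · exact ht (hit ▸ h)
        · exact h hit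
      · rcases h with h | ⟨_, h⟩
        · exact ht (hit ▸ h)
        · simp at h
    · exact fun h => Or.inl (Or.inr ⟨h, trivial⟩)
  have h2 := Set.ncard_add_ncard_compl ({t} : Set (Fin n))
  rw [legCount, h1]
  simp only [Set.ncard_singleton, Nat.card_eq_fintype_card, Fintype.card_fin] at h2
  omega

lemma compl_XS (S : Finset (Fin n)) (t : Fin n) :
    (XS S t)ᶜ = {p : En n | p.1 ∉ S ∧ (p.1 = t ∨ p.2 = false)} := by
  ext ⟨j, b⟩
  simp only [XS, Set.mem_compl_iff, Set.mem_setOf_eq, not_or, not_and]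
  cases b <;> simp <;> tauto

lemma legCount_compl_XS {S : Finset (Fin n)} (hS : S.Nonempty) {t : Fin n} (ht : t ∉ S) :
    legCount ((XS S t)ᶜ) = n - S.card := by
  have h1 : {i : Fin n | (i, true) ∈ (XS S t)ᶜ ∨ (i, false) ∈ (XS S t)ᶜ} = (↑S : Set (Fin n))ᶜ := by
    ext i
    simp only [compl_XS, Set.mem_setOf_eq, Set.mem_compl_iff, Finset.coe_sort_coe,
      Finset.mem_coe]
    constructor
    · rintro (⟨h, _⟩ | ⟨h, _⟩) <;> exact h
    · exact fun h => Or.inr ⟨h, Or.inr trivial⟩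
  have h2 := Set.ncard_add_ncard_compl (↑S : Set (Fin n))
  rw [legCount, h1]
  simp only [Set.ncard_coe_finset, Nat.card_eq_fintype_card, Fintype.card_fin] at h2
  omega

lemma freeSpikeRank_XS {S : Finset (Fin n)} (hS : S.Nonempty) {t : Fin n} (ht : t ∉ S)
    (hn : 1 ≤ n) : freeSpikeRank n (XS S t) = n := by
  rw [freeSpikeRank, if_neg, if_pos, legCount_XS ht]
  · omega
  · obtain ⟨s, hs⟩ := hS
    exact ⟨s, fun p hp => Or.inl (by rw [mem_leg.mp hp]; exact hs)⟩
  · intro h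
    refine h t (Set.disjoint_left.mpr fun p hp hp' => ?_)
    have := mem_leg.mp hp
    rcases hp' with h' | ⟨h', hb⟩
    · exact ht (this ▸ h')
    · exact h' this

lemma freeSpikeRank_compl_XS {S : Finset (Fin n)} (hS : S.Nonempty) {t : Fin n} (ht : t ∉ S) :
    freeSpikeRank n ((XS S t)ᶜ) = (n - S.card) + 1 := by
  rw [freeSpikeRank, if_neg, if_pos, legCount_compl_XS hS ht]
  · refine ⟨t, fun p hp => ?_⟩
    rw [compl_XS, Set.mem_setOf_eq, mem_leg.mp hp]
    exact ⟨ht, Or.inl rfl⟩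
  · obtain ⟨s, hs⟩ := hS
    intro h
    refine h s (Set.disjoint_left.mpr fun p hp hp' => ?_)
    rw [compl_XS, Set.mem_setOf_eq, mem_leg.mp hp] at hp'
    exact hp'.1 hs

lemma ncard_compl_XS {S : Finset (Fin n)} {t : Fin n} (ht : t ∉ S) :
    ((XS S t)ᶜ).ncard = (n - S.card) + 1 := by
  have h1 : (XS S t)ᶜ =
      insert ((t, true) : En n) ((fun j => ((j, false) : En n)) '' (↑(Sᶜ) : Set (Fin n))) := by
    ext ⟨j, b⟩
    rw [compl_XS]
    simp only [Set.mem_setOf_eq, Set.mem_insert_iff, Set.mem_image, Finset.coe_compl,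
      Set.mem_compl_iff, Finset.mem_coe, Prod.mk.injEq]
    cases b <;> simp
    · rintro rfl
      exact ht
  rw [h1, Set.ncard_insert_of_notMem (by simp),
    Set.ncard_image_of_injective _ (fun a b h => by simpa using h)]
  rw [Set.ncard_coe_finset, Finset.card_compl, Fintype.card_fin]

lemma ncard_XS {S : Finset (Fin n)} {t : Fin n} (ht : t ∉ S) :
    (XS S t).ncard = 2 * n - ((n - S.card) + 1) := by
  have h2 := Set.ncard_add_ncard_compl (XS S t)
  rw [card_En, ncard_compl_XS ht] at h2
  omega

end Stmt11Aux

open Stmt11Aux in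
/-- If a spiky function is the connectivity function of a matroid `M`, then `M` is a
rank-`n` spike with legs `L_1, …, L_n`: any union of `k` legs (1 ≤ k ≤ n−1) has rank
`k + 1`, and `E_n` has rank `n`. -/
theorem stmt11 {n : ℕ} (hn : 2 < n) (lam : Set (En n) → ℕ) (hs : IsSpiky n lam)
    (M : Matroid (En n)) (hE : M.E = Set.univ)
    (hconn : ∀ X, (lam X : ℤ) = mconn M X) :
    (∀ k : ℕ, 1 ≤ k → k ≤ n - 1 → ∀ s : Finset (Fin n), s.card = k →
      mrank M (⋃ i ∈ s, leg n i) = k + 1) ∧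
    mrank M (Set.univ : Set (En n)) = n := by
  classical
  obtain ⟨hsym, hnt, -, -⟩ := hs
  have hub : ∀ X : Set (En n), mrank M X ≤ mrank M Set.univ :=
    fun X => mrank_mono M (Set.subset_univ X)
  have key : ∀ X : Set (En n), ¬ IsTransversal X →
      (freeSpikeRank n X : ℤ) + (freeSpikeRank n Xᶜ : ℤ) - (n : ℤ)
        = (mrank M X : ℤ) + (mrank M Xᶜ : ℤ) - (mrank M Set.univ : ℤ) := by
    intro X hX
    have h1 := (hnt X hX).symm.trans (hconn X)
    rw [lamN, mconn, hE, ← Set.compl_eq_univ_diff] at h1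
    exact h1
  -- Step A : the matroid has rank n
  have hs0t0 : (⟨0, by omega⟩ : Fin n) ≠ ⟨1, by omega⟩ := by
    simp [Fin.ext_iff]
  have ht0 : (⟨1, by omega⟩ : Fin n) ∉ ({⟨0, by omega⟩} : Finset (Fin n)) := by
    simp [Fin.ext_iff]
  have hS1ne : ({⟨0, by omega⟩} : Finset (Fin n)).Nonempty := ⟨_, Finset.mem_singleton_self _⟩
  have hNn : mrank M Set.univ = n := by
    have hkey := key (XS ({⟨0, by omega⟩} : Finset (Fin n)) ⟨1, by omega⟩)
      (not_transversal_XS hS1ne _)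
    rw [freeSpikeRank_XS hS1ne ht0 (by omega), freeSpikeRank_compl_XS hS1ne ht0,
      Finset.card_singleton] at hkey
    have hb1 : mrank M (XS ({⟨0, by omega⟩} : Finset (Fin n)) ⟨1, by omega⟩)
        ≤ 2 * n - ((n - 1) + 1) := by
      have := mrank_le_ncard M (XS ({⟨0, by omega⟩} : Finset (Fin n)) ⟨1, by omega⟩)
      rwa [ncard_XS ht0] at this
    have hb2 : mrank M ((XS ({⟨0, by omega⟩} : Finset (Fin n)) ⟨1, by omega⟩)ᶜ)
        ≤ (n - 1) + 1 := by
      have := mrank_le_ncard M ((XS ({⟨0, by omega⟩} : Finset (Fin n)) ⟨1, by omega⟩)ᶜ)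
      rwa [ncard_compl_XS ht0] at this
    have hb3 := hub (XS ({⟨0, by omega⟩} : Finset (Fin n)) ⟨1, by omega⟩)
    have hb4 := hub ((XS ({⟨0, by omega⟩} : Finset (Fin n)) ⟨1, by omega⟩)ᶜ)
    omega
  -- Step B : each "leg plus partial transversal" is independent
  have hIND : ∀ S : Finset (Fin n), S.Nonempty → ∀ t ∉ S, M.Indep ((XS S t)ᶜ) := by
    intro S hSne t ht
    have hkey := key (XS S t) (not_transversal_XS hSne t)
    rw [freeSpikeRank_XS hSne ht (by omega), freeSpikeRank_compl_XS hSne ht] at hkey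
    have hb1 := hub (XS S t)
    refine indep_of_ncard_le_mrank ?_
    rw [ncard_compl_XS ht]
    omega
  -- Step C : lower bound for the rank of a union of legs
  have hLB : ∀ S : Finset (Fin n), S.Nonempty → Sᶜ.Nonempty →
      S.card + 1 ≤ mrank M (US S) := by
    intro S hSne hScne
    obtain ⟨t, htS⟩ := hSne
    have htc : t ∉ Sᶜ := by simp [htS]
    have hW : M.Indep ((XS Sᶜ t)ᶜ) := hIND Sᶜ hScne t htc
    have hWsub : (XS Sᶜ t)ᶜ ⊆ US S := by
      intro p hp
      rw [compl_XS] at hp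
      have h1 : p.1 ∉ Sᶜ := hp.1
      simp only [Finset.mem_compl, not_not] at h1
      exact h1
    have hle := ncard_le_mrank hW hWsub
    rw [ncard_compl_XS htc] at hle
    have hc : Sᶜ.card = n - S.card := by rw [Finset.card_compl, Fintype.card_fin]
    have hle2 : S.card ≤ n := by
      have := Finset.card_le_univ S
      simpa using this
    omega
  constructor
  · intro k hk1 hk2 s hcard
    have hne : s.Nonempty := Finset.card_pos.mp (by omega)
    have hcne : sᶜ.Nonempty := by
      rw [← Finset.card_pos, Finset.card_compl, Fintype.card_fin]
      omega
    obtain ⟨t, ht⟩ := id hcne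
    have htns : t ∉ s := Finset.mem_compl.mp ht
    obtain ⟨u, hu⟩ := id hne
    have hunc : u ∉ sᶜ := by simp [hu]
    have hkey := key (US s) (not_transversal_US hne)
    rw [US_eq]
    rw [freeSpikeRank_US hne htns, compl_US, freeSpikeRank_US ⟨t, ht⟩ hunc, hNn] at hkey
    have h1 := hLB s hne ⟨t, ht⟩
    have h2 : sᶜ.card + 1 ≤ mrank M (US sᶜ) := by
      refine hLB sᶜ ⟨t, ht⟩ ?_
      rw [compl_compl]
      exact hne
    have hc : sᶜ.card = n - s.card := by rw [Finset.card_compl, Fintype.card_fin]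
    omega
  · exact hNn
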